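/- Let T be a finite rooted tree where each node carries a value from a totally ordered commutative monoid (ℕ, +, max): leaves carry positive integer weights, internal nodes are labeled either '+' or 'max', and eval is defined recursively. Let m exceed the sum of all leaf weights and let r ≥ 2. Replace each '+' node by '×', each 'max' node by '+', and each leaf weight w by r^{m·w}; let v' be the value of the resulting {+,×}-tree. Then the value v of the original {+,max}-tree satisfies v = ⌊(log_r v') / m⌋. -/

import Mathlib

/-- A `{+, max}`-tree: leaves carry natural-number weights and internal nodes
are labeled `+` or `max`. -/
inductive MaxPlusTree where
  | leaf (w : ℕ)
  | plus (l r : MaxPlusTree)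
  | mx (l r : MaxPlusTree)

/-- Evaluation of a `{+, max}`-tree. -/
def evalMaxPlus : MaxPlusTree → ℕ
  | .leaf w => w
  | .plus a b => evalMaxPlus a + evalMaxPlus b
  | .mx a b => max (evalMaxPlus a) (evalMaxPlus b)

/-- Evaluation of the transformed `{+, ×}`-tree: each `+` node becomes `×`,
each `max` node becomes `+`, and each leaf weight `w` becomes `r ^ (m·w)`. -/
def evalPlusTimes (r m : ℕ) : MaxPlusTree → ℕ
  | .leaf w => r ^ (m * w)
  | .plus a b => evalPlusTimes r m a * evalPlusTimes r m b
  | .mx a b => evalPlusTimes r m a + evalPlusTimes r m b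

/-- The sum of all leaf weights of a tree. -/
def leafSum : MaxPlusTree → ℕ
  | .leaf w => w
  | .plus a b => leafSum a + leafSum b
  | .mx a b => leafSum a + leafSum b

/-- All leaf weights are positive. -/
def leavesPos : MaxPlusTree → Prop
  | .leaf w => 0 < w
  | .plus a b => leavesPos a ∧ leavesPos b
  | .mx a b => leavesPos a ∧ leavesPos b

lemma leafSum_pos (t : MaxPlusTree) (h : leavesPos t) : 0 < leafSum t := by
  induction t with
  | leaf w => exact h
  | plus a b ha hb => exact Nat.add_pos_left (ha h.1) _
  | mx a b ha hb => exact Nat.add_pos_left (ha h.1) _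

lemma eval_bounds (t : MaxPlusTree) (r m : ℕ) (hr : 2 ≤ r) (hpos : leavesPos t) :
    r ^ (m * evalMaxPlus t) ≤ evalPlusTimes r m t ∧
    evalPlusTimes r m t < r ^ (m * evalMaxPlus t + leafSum t) := by
  have hr1 : 1 < r := hr
  induction t with
  | leaf w =>
    refine ⟨le_refl _, ?_⟩
    have hw : 0 < w := hpos
    apply Nat.pow_lt_pow_right hr1
    simp only [evalMaxPlus, leafSum]
    omega
  | plus a b ha hb =>
    obtain ⟨ha1, ha2⟩ := ha hpos.1
    obtain ⟨hb1, hb2⟩ := hb hpos.2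
    constructor
    · calc r ^ (m * evalMaxPlus (a.plus b))
          = r ^ (m * evalMaxPlus a) * r ^ (m * evalMaxPlus b) := by
            simp [evalMaxPlus, Nat.mul_add, pow_add]
      _ ≤ evalPlusTimes r m a * evalPlusTimes r m b := Nat.mul_le_mul ha1 hb1
      _ = evalPlusTimes r m (a.plus b) := rfl
    · calc evalPlusTimes r m (a.plus b)
          = evalPlusTimes r m a * evalPlusTimes r m b := rfl
      _ < r ^ (m * evalMaxPlus a + leafSum a) * r ^ (m * evalMaxPlus b + leafSum b) :=
            mul_lt_mul'' ha2 hb2 (Nat.zero_le _) (Nat.zero_le _)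
      _ = r ^ (m * evalMaxPlus (a.plus b) + leafSum (a.plus b)) := by
            rw [← pow_add]; congr 1
            simp [evalMaxPlus, leafSum, Nat.mul_add]; ring
  | mx a b ha hb =>
    obtain ⟨ha1, ha2⟩ := ha hpos.1
    obtain ⟨hb1, hb2⟩ := hb hpos.2
    have hsa : 0 < leafSum a := leafSum_pos a hpos.1
    have hsb : 0 < leafSum b := leafSum_pos b hpos.2
    set v := max (evalMaxPlus a) (evalMaxPlus b) with hv
    constructor
    · show r ^ (m * v) ≤ evalPlusTimes r m a + evalPlusTimes r m b
      rcases max_cases (evalMaxPlus a) (evalMaxPlus b) with ⟨h, _⟩ | ⟨h, _⟩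
      · calc r ^ (m * v) = r ^ (m * evalMaxPlus a) := by rw [hv, h]
        _ ≤ evalPlusTimes r m a := ha1
        _ ≤ _ := Nat.le_add_right _ _
      · calc r ^ (m * v) = r ^ (m * evalMaxPlus b) := by rw [hv, h]
        _ ≤ evalPlusTimes r m b := hb1
        _ ≤ _ := Nat.le_add_left _ _
    · show evalPlusTimes r m a + evalPlusTimes r m b < r ^ (m * v + (leafSum a + leafSum b))
      have h1 : m * evalMaxPlus a + leafSum a ≤ m * v + (leafSum a + leafSum b) - 1 := by
        have : evalMaxPlus a ≤ v := le_max_left _ _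
        have : m * evalMaxPlus a ≤ m * v := Nat.mul_le_mul_left _ this
        omega
      have h2 : m * evalMaxPlus b + leafSum b ≤ m * v + (leafSum a + leafSum b) - 1 := by
        have : evalMaxPlus b ≤ v := le_max_right _ _
        have : m * evalMaxPlus b ≤ m * v := Nat.mul_le_mul_left _ this
        omega
      have key : evalPlusTimes r m a + evalPlusTimes r m b <
          2 * r ^ (m * v + (leafSum a + leafSum b) - 1) := by
        have la := lt_of_lt_of_le ha2 (Nat.pow_le_pow_right (by omega) h1)
        have lb := lt_of_lt_of_le hb2 (Nat.pow_le_pow_right (by omega) h2)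
        omega
      calc evalPlusTimes r m a + evalPlusTimes r m b
          < 2 * r ^ (m * v + (leafSum a + leafSum b) - 1) := key
        _ ≤ r * r ^ (m * v + (leafSum a + leafSum b) - 1) := Nat.mul_le_mul_right _ hr
        _ = r ^ (m * v + (leafSum a + leafSum b)) := by
            rw [← pow_succ']; congr 1; omega

theorem maxPlus_eval_eq_log_div (t : MaxPlusTree) (r m : ℕ)
    (hr : 2 ≤ r) (hpos : leavesPos t) (hm : leafSum t < m) :
    evalMaxPlus t = Nat.log r (evalPlusTimes r m t) / m := by
  obtain ⟨h1, h2⟩ := eval_bounds t r m hr hpos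
  have hr1 : 1 < r := hr
  have hm0 : 0 < m := by have := leafSum_pos t hpos; omega
  have hvpos : 0 < evalPlusTimes r m t :=
    lt_of_lt_of_le (pow_pos (by omega) _) h1
  have hlo : m * evalMaxPlus t ≤ Nat.log r (evalPlusTimes r m t) :=
    Nat.le_log_of_pow_le hr1 h1
  have hhi : Nat.log r (evalPlusTimes r m t) < m * evalMaxPlus t + m := by
    apply Nat.log_lt_of_lt_pow hvpos.ne'
    exact lt_of_lt_of_le h2 (Nat.pow_le_pow_right (by omega) (by omega))
  symm
  apply Nat.div_eq_of_lt_le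
  · rw [Nat.mul_comm]; exact hlo
  · rw [Nat.succ_mul, Nat.mul_comm]; exact hhi
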